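/- Let M ≥ 1 and set c = (M − 1/2) Γ(M) / π^M. Let f : ℂ^M → [0,∞) be a measurable probability density with respect to Lebesgue measure that vanishes (a.e.) outside the closed unit ball, and assume that a ↦ f(a) log f(a) and a ↦ f(a) log‖a‖ are integrable. Then −∫ f(a) log f(a) da − ∫ f(a) log‖a‖ da ≤ −log c, with equality when f(a) = c ‖a‖^{−1} 𝟙{‖a‖ ≤ 1}. -/

import Mathlib

open MeasureTheory Real
open scoped ENNReal

noncomputable instance (M : ℕ) : MeasurableSpace (EuclideanSpace ℂ (Fin M)) :=
  MeasurableSpace.comap WithLp.ofLp MeasurableSpace.pi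

instance (M : ℕ) : BorelSpace (EuclideanSpace ℂ (Fin M)) := PiLp.borelSpace 2

open Set Metric in
lemma lintegral_norm_polar_aux {E : Type*} [NormedAddCommGroup E] [NormedSpace ℝ E]
    [MeasurableSpace E] [BorelSpace E] [Nontrivial E] [FiniteDimensional ℝ E]
    (μ : Measure E) [μ.IsAddHaarMeasure] (g : ℝ → ℝ≥0∞) (hg : Measurable g) :
    ∫⁻ x, g ‖x‖ ∂μ = (Module.finrank ℝ E) * μ (Metric.ball 0 1) *
      ∫⁻ y in Ioi (0:ℝ), ENNReal.ofReal (y ^ (Module.finrank ℝ E - 1)) * g y := by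
  have h1 : ∫⁻ x : ({0}ᶜ : Set E), g ‖(x : E)‖ ∂(μ.comap (↑)) = ∫⁻ x, g ‖x‖ ∂μ := by
    rw [lintegral_subtype_comap (measurableSet_singleton (0:E)).compl (fun a => g ‖a‖),
      MeasureTheory.restrict_compl_singleton]
  have h2 : ∫⁻ x : ({0}ᶜ : Set E), g ‖(x : E)‖ ∂(μ.comap (↑))
      = ∫⁻ z : (sphere (0:E) 1 × Ioi (0:ℝ)), g z.2
          ∂(μ.toSphere.prod (.volumeIoiPow (Module.finrank ℝ E - 1))) := by
    have := (μ.measurePreserving_homeomorphUnitSphereProd).lintegral_comp_emb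
      (Homeomorph.measurableEmbedding _) (fun z : (sphere (0:E) 1 × Ioi (0:ℝ)) => g z.2)
    simpa [homeomorphUnitSphereProd] using this
  have h3 : ∫⁻ z : (sphere (0:E) 1 × Ioi (0:ℝ)), g z.2
        ∂(μ.toSphere.prod (.volumeIoiPow (Module.finrank ℝ E - 1)))
      = μ.toSphere univ * ∫⁻ r : Ioi (0:ℝ), g r
          ∂(Measure.volumeIoiPow (Module.finrank ℝ E - 1)) := by
    rw [lintegral_prod (fun z : (sphere (0:E) 1 × Ioi (0:ℝ)) => g z.2)
      (by exact (hg.comp (measurable_subtype_coe.comp measurable_snd)).aemeasurable)]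
    simp only []
    rw [lintegral_const, mul_comm]
  have h4 : ∫⁻ r : Ioi (0:ℝ), g r ∂(Measure.volumeIoiPow (Module.finrank ℝ E - 1))
      = ∫⁻ y in Ioi (0:ℝ), ENNReal.ofReal (y ^ (Module.finrank ℝ E - 1)) * g y := by
    rw [Measure.volumeIoiPow, lintegral_withDensity_eq_lintegral_mul _
      (by exact (measurable_subtype_coe.pow_const _).ennreal_ofReal)
      (by exact hg.comp measurable_subtype_coe :
        Measurable fun r : Ioi (0:ℝ) => g ↑r)]
    simp only [Pi.mul_apply]
    rw [lintegral_subtype_comap measurableSet_Ioi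
      (fun y => ENNReal.ofReal (y ^ (Module.finrank ℝ E - 1)) * g y)]
  rw [← h1, h2, h3, h4, Measure.toSphere_apply_univ]

open Set Metric in
lemma lintegral_inv_norm_ball (M : ℕ) (hM : 1 ≤ M) :
    ∫⁻ x : EuclideanSpace ℂ (Fin M),
        (if ‖x‖ ≤ 1 then ENNReal.ofReal ‖x‖⁻¹ else 0)
      = ENNReal.ofReal (π ^ M / (((M : ℝ) - 1 / 2) * Real.Gamma M)) := by
  haveI : Nonempty (Fin M) := ⟨⟨0, hM⟩⟩
  haveI : Nontrivial (EuclideanSpace ℂ (Fin M)) := inferInstance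
  set G : ℝ → ℝ≥0∞ := fun r => if r ≤ 1 then ENNReal.ofReal r⁻¹ else 0 with hG
  suffices hgoal : (∫⁻ x : EuclideanSpace ℂ (Fin M), G ‖x‖)
      = ENNReal.ofReal (π ^ M / (((M : ℝ) - 1 / 2) * Real.Gamma M)) by
    exact hgoal
  have hGmeas : Measurable G := by
    refine Measurable.ite ?_ measurable_inv.ennreal_ofReal measurable_const
    exact measurableSet_Iic
  have hdim : Module.finrank ℝ (EuclideanSpace ℂ (Fin M)) = 2 * M := by
    rw [← Module.finrank_mul_finrank ℝ ℂ (EuclideanSpace ℂ (Fin M)),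
      Complex.finrank_real_complex, finrank_euclideanSpace_fin]
  have hpolar := lintegral_norm_polar_aux
    (volume : Measure (EuclideanSpace ℂ (Fin M))) G hGmeas
  rw [hdim] at hpolar
  have hMR : (1:ℝ) ≤ (M:ℝ) := by exact_mod_cast hM
  -- the radial integral
  have hrad : ∫⁻ y in Ioi (0:ℝ), ENNReal.ofReal (y ^ (2 * M - 1)) * G y
      = ENNReal.ofReal (1 / (2 * (M:ℝ) - 1)) := by
    have hsplit : Ioi (0:ℝ) = Ioc (0:ℝ) 1 ∪ Ioi (1:ℝ) :=
      (Ioc_union_Ioi_eq_Ioi zero_le_one).symm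
    rw [hsplit, lintegral_union measurableSet_Ioi (Ioc_disjoint_Ioi le_rfl)]
    have h2 : ∫⁻ y in Ioi (1:ℝ), ENNReal.ofReal (y ^ (2 * M - 1)) * G y = 0 := by
      rw [setLIntegral_congr_fun measurableSet_Ioi
        (fun y hy => ?_), lintegral_zero]
      have hy1 : ¬ (y ≤ 1) := not_le.2 hy
      simp [hG, hy1]
    have h1 : ∫⁻ y in Ioc (0:ℝ) 1, ENNReal.ofReal (y ^ (2 * M - 1)) * G y
        = ∫⁻ y in Ioc (0:ℝ) 1, ENNReal.ofReal (y ^ (2 * M - 2)) := by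
      refine setLIntegral_congr_fun measurableSet_Ioc
        (fun y hy => ?_)
      have hy0 : 0 < y := hy.1
      have hy1 : y ≤ 1 := hy.2
      simp only [hG, if_pos hy1]
      rw [← ENNReal.ofReal_mul (by positivity)]
      congr 1
      have hexp : 2 * M - 1 = (2 * M - 2) + 1 := by omega
      rw [hexp, pow_succ]
      field_simp
    have h3 : ∫⁻ y in Ioc (0:ℝ) 1, ENNReal.ofReal (y ^ (2 * M - 2))
        = ENNReal.ofReal (1 / (2 * (M:ℝ) - 1)) := by
      rw [← ofReal_integral_eq_lintegral_ofReal
        ((intervalIntegral.intervalIntegrable_pow (2 * M - 2)).1)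
        ((ae_restrict_mem measurableSet_Ioc).mono (fun y hy => by
          have : (0:ℝ) < y := hy.1
          positivity))]
      rw [← intervalIntegral.integral_of_le zero_le_one, integral_pow]
      congr 1
      rw [one_pow, zero_pow (by omega : 2 * M - 2 + 1 ≠ 0), sub_zero]
      have h2M : (2:ℕ) ≤ 2 * M := by omega
      rw [Nat.cast_sub h2M]
      push_cast
      ring_nf
    rw [h1, h2, h3, add_zero]
  rw [hrad] at hpolar
  have hball := InnerProductSpace.volume_ball (0 : EuclideanSpace ℂ (Fin M)) 1
  rw [hdim] at hball
  rw [hball] at hpolar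
  rw [hpolar]
  have hΓpos : 0 < Real.Gamma (M:ℝ) := Real.Gamma_pos_of_pos (by linarith)
  have hsqrtpi : Real.sqrt π ^ (2 * M) = π ^ M := by
    rw [pow_mul, Real.sq_sqrt pi_pos.le]
  have hGamma : Real.Gamma (((2 * M : ℕ) : ℝ) / 2 + 1) = (M:ℝ) * Real.Gamma (M:ℝ) := by
    have hcast : ((2 * M : ℕ) : ℝ) / 2 = (M:ℝ) := by push_cast; ring
    rw [hcast, Real.Gamma_add_one (by linarith)]
  rw [hGamma, hsqrtpi, ENNReal.ofReal_one, one_pow, one_mul]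
  have hDpos : (0:ℝ) < π ^ M / ((M:ℝ) * Real.Gamma (M:ℝ)) :=
    div_pos (pow_pos pi_pos M) (mul_pos (by linarith) hΓpos)
  have hcast2 : ((2 * M : ℕ) : ℝ≥0∞) = ENNReal.ofReal ((2 * M : ℕ) : ℝ) :=
    (ENNReal.ofReal_natCast _).symm
  rw [hcast2, ← ENNReal.ofReal_mul (by positivity),
    ← ENNReal.ofReal_mul (mul_nonneg (by positivity) hDpos.le)]
  congr 1
  have h2M1 : (0:ℝ) < 2 * (M:ℝ) - 1 := by linarith
  have hMne : ((M:ℝ)) ≠ 0 := by linarith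
  have hden4 : ((M:ℝ) - 1/2) ≠ 0 := by
    have : (0:ℝ) < (M:ℝ) - 1/2 := by linarith
    exact this.ne'
  push_cast
  rw [eq_div_iff (mul_ne_zero hden4 hΓpos.ne')]
  field_simp [hMne, hΓpos.ne', h2M1.ne']

/-- Maximum-entropy property: among probability densities `f` on `ℂ^M` supported in the
closed unit ball, the quantity `h(f) - E_f[log‖a‖] = -∫ f log f - ∫ f log‖a‖` is at most
`-log c` with `c = (M - 1/2) Γ(M) / π^M`, with equality for `f(a) = c ‖a‖⁻¹ 𝟙{‖a‖ ≤ 1}`. -/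
theorem maxEntropy_inv_norm_density (M : ℕ) (hM : 1 ≤ M)
    (c : ℝ) (hc : c = ((M : ℝ) - 1 / 2) * Real.Gamma M / π ^ M)
    (f : EuclideanSpace ℂ (Fin M) → ℝ)
    (hf_meas : Measurable f) (hf_nonneg : ∀ a, 0 ≤ f a)
    (hf_prob : ∫ a, f a = 1)
    (hf_supp : ∀ᵐ a : EuclideanSpace ℂ (Fin M),
      a ∉ Metric.closedBall (0 : EuclideanSpace ℂ (Fin M)) 1 → f a = 0)
    (hf_int₁ : Integrable fun a => f a * Real.log (f a))
    (hf_int₂ : Integrable fun a : EuclideanSpace ℂ (Fin M) => f a * Real.log ‖a‖) :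
    (-∫ a, f a * Real.log (f a)) - (∫ a : EuclideanSpace ℂ (Fin M), f a * Real.log ‖a‖)
        ≤ -Real.log c ∧
      ((∀ a : EuclideanSpace ℂ (Fin M),
          f a = (Metric.closedBall (0 : EuclideanSpace ℂ (Fin M)) 1).indicator
            (fun a => c * ‖a‖⁻¹) a) →
        (-∫ a, f a * Real.log (f a))
            - (∫ a : EuclideanSpace ℂ (Fin M), f a * Real.log ‖a‖) = -Real.log c) := by
  haveI : Nonempty (Fin M) := ⟨⟨0, hM⟩⟩
  haveI : Nontrivial (EuclideanSpace ℂ (Fin M)) := inferInstance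
  have hMR : (1:ℝ) ≤ (M:ℝ) := by exact_mod_cast hM
  have hΓpos : 0 < Real.Gamma (M:ℝ) := Real.Gamma_pos_of_pos (by linarith)
  have hcpos : 0 < c := by
    rw [hc]
    exact div_pos (mul_pos (by linarith) hΓpos) (by positivity)
  have hcK : c * (π ^ M / (((M : ℝ) - 1 / 2) * Real.Gamma M)) = 1 := by
    rw [hc]
    have h1 : ((M:ℝ) - 1/2) ≠ 0 := by
      have : (0:ℝ) < (M:ℝ) - 1/2 := by linarith
      exact this.ne'
    have h2 : (π:ℝ) ^ M ≠ 0 := by positivity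
    rw [div_mul_div_comm, mul_comm (((M:ℝ) - 1 / 2) * Real.Gamma M) ((π:ℝ) ^ M)]
    exact div_self (mul_ne_zero h2 (mul_ne_zero h1 hΓpos.ne'))
  have h0 : ∀ᵐ a : EuclideanSpace ℂ (Fin M) ∂volume, a ≠ 0 := by
    filter_upwards [(Set.countable_singleton (0 : EuclideanSpace ℂ (Fin M))).ae_notMem
      volume] with a ha
    simpa using ha
  have hf_int0 : Integrable f := by
    by_contra h
    rw [integral_undef h] at hf_prob
    exact one_ne_zero hf_prob.symm
  set g : EuclideanSpace ℂ (Fin M) → ℝ :=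
    (Metric.closedBall (0 : EuclideanSpace ℂ (Fin M)) 1).indicator
      (fun a => c * ‖a‖⁻¹) with hgdef
  have hg_nonneg : ∀ a, 0 ≤ g a := fun a =>
    Set.indicator_nonneg (fun x _ => by positivity) a
  have hgL : ∫⁻ a, ENNReal.ofReal (g a) = ENNReal.ofReal 1 := by
    have hpt : ∀ a : EuclideanSpace ℂ (Fin M), ENNReal.ofReal (g a)
        = ENNReal.ofReal c * (if ‖a‖ ≤ 1 then ENNReal.ofReal ‖a‖⁻¹ else 0) := by
      intro a
      rcases le_or_gt ‖a‖ 1 with h | h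
      · rw [if_pos h, hgdef, Set.indicator_of_mem (mem_closedBall_zero_iff.2 h),
          ENNReal.ofReal_mul hcpos.le]
      · rw [if_neg (not_le.2 h), hgdef,
          Set.indicator_of_notMem
            (fun hm => absurd (mem_closedBall_zero_iff.1 hm) (not_le.2 h)),
          ENNReal.ofReal_zero, mul_zero]
    simp_rw [hpt]
    rw [lintegral_const_mul _ (by
      refine Measurable.comp (f := fun a : EuclideanSpace ℂ (Fin M) => ‖a‖)
        (g := fun r : ℝ => if r ≤ 1 then ENNReal.ofReal r⁻¹ else 0) ?_ measurable_norm
      exact Measurable.ite measurableSet_Iic measurable_inv.ennreal_ofReal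
        measurable_const)]
    rw [lintegral_inv_norm_ball M hM, ← ENNReal.ofReal_mul hcpos.le, hcK]
  constructor
  · -- inequality
    set ψ : EuclideanSpace ℂ (Fin M) → ℝ := fun a =>
      f a - (f a * Real.log (f a) + f a * Real.log ‖a‖ - f a * Real.log c) with hψ
    have hint_c : Integrable (fun a : EuclideanSpace ℂ (Fin M) => f a * Real.log c) :=
      hf_int0.mul_const _
    have hint_s : Integrable (fun a : EuclideanSpace ℂ (Fin M) =>
        f a * Real.log (f a) + f a * Real.log ‖a‖) := by
      exact hf_int₁.add hf_int₂
    have hint_t : Integrable (fun a : EuclideanSpace ℂ (Fin M) =>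
        f a * Real.log (f a) + f a * Real.log ‖a‖ - f a * Real.log c) := by
      exact hint_s.sub hint_c
    have hψ_int : Integrable ψ := by
      exact hf_int0.sub hint_t
    have hkey : ∀ᵐ a : EuclideanSpace ℂ (Fin M) ∂volume, ψ a ≤ g a := by
      filter_upwards [hf_supp, h0] with a hsupp hane
      rcases eq_or_lt_of_le (hf_nonneg a) with hfa | hfa
      · have hfa0 : f a = 0 := hfa.symm
        have hψa : ψ a = 0 := by simp [hψ, hfa0]
        rw [hψa]
        exact hg_nonneg a
      · have hmem : a ∈ Metric.closedBall (0 : EuclideanSpace ℂ (Fin M)) 1 := by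
          by_contra hm
          exact absurd (hsupp hm) (ne_of_gt hfa)
        have hnorm : 0 < ‖a‖ := norm_pos_iff.2 hane
        have hnorm1 : ‖a‖ ≤ 1 := mem_closedBall_zero_iff.1 hmem
        set t : ℝ := f a * ‖a‖ / c with ht
        have htpos : 0 < t := by positivity
        have hlog : 1 - t⁻¹ ≤ Real.log t := by
          have h := Real.log_le_sub_one_of_pos (inv_pos.2 htpos)
          rw [Real.log_inv] at h
          linarith
        have hlogt : Real.log t = Real.log (f a) + Real.log ‖a‖ - Real.log c := by
          rw [ht, Real.log_div (by positivity) (ne_of_gt hcpos),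
            Real.log_mul (ne_of_gt hfa) (ne_of_gt hnorm)]
        have htinv : t⁻¹ = c / (f a * ‖a‖) := by
          rw [ht]
          field_simp
        have hmul : f a * (1 - t⁻¹) ≤ f a * Real.log t :=
          mul_le_mul_of_nonneg_left hlog hfa.le
        have hval : f a * (1 - t⁻¹) = f a - c * ‖a‖⁻¹ := by
          rw [htinv]
          field_simp
        have hexp : f a * Real.log t
            = f a * Real.log (f a) + f a * Real.log ‖a‖ - f a * Real.log c := by
          rw [hlogt]; ring
        have hga : g a = c * ‖a‖⁻¹ := by
          rw [hgdef, Set.indicator_of_mem hmem]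
        simp only [hψ, hga]
        linarith [hmul, hval, hexp]
    have hψpos_int : Integrable (fun a => max (ψ a) 0) := hψ_int.pos_part
    have step1 : ∫ a, ψ a ≤ ∫ a, max (ψ a) 0 :=
      integral_mono hψ_int hψpos_int (fun a => le_max_left _ _)
    have step2 : ENNReal.ofReal (∫ a, max (ψ a) 0)
        = ∫⁻ a, ENNReal.ofReal (max (ψ a) 0) :=
      ofReal_integral_eq_lintegral_ofReal hψpos_int
        (Filter.Eventually.of_forall (fun a => le_max_right _ _))
    have step3 : ∫⁻ a, ENNReal.ofReal (max (ψ a) 0) ≤ ∫⁻ a, ENNReal.ofReal (g a) := by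
      refine lintegral_mono_ae ?_
      filter_upwards [hkey] with a ha
      exact ENNReal.ofReal_le_ofReal (max_le ha (hg_nonneg a))
    have step4 : ∫ a, max (ψ a) 0 ≤ 1 := by
      have h := step3.trans_eq hgL
      rw [← step2] at h
      exact (ENNReal.ofReal_le_ofReal_iff zero_le_one).1 h
    have hψval : ∫ a, ψ a
        = 1 - ((∫ a, f a * Real.log (f a))
            + (∫ a : EuclideanSpace ℂ (Fin M), f a * Real.log ‖a‖) - Real.log c) := by
      have e1 : ∫ a, ψ a = (∫ a, f a) - ∫ a, (f a * Real.log (f a)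
          + f a * Real.log ‖a‖ - f a * Real.log c) := by
        exact integral_sub hf_int0 hint_t
      have e2 : ∫ a, (f a * Real.log (f a) + f a * Real.log ‖a‖ - f a * Real.log c)
          = (∫ a, (f a * Real.log (f a) + f a * Real.log ‖a‖))
            - ∫ a, f a * Real.log c := by
        exact integral_sub hint_s hint_c
      have e3 : ∫ a, (f a * Real.log (f a) + f a * Real.log ‖a‖)
          = (∫ a, f a * Real.log (f a))
            + ∫ a : EuclideanSpace ℂ (Fin M), f a * Real.log ‖a‖ := by
        exact integral_add hf_int₁ hf_int₂
      have e4 : ∫ a, f a * Real.log c = Real.log c := by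
        rw [integral_mul_const, hf_prob, one_mul]
      rw [e1, e2, e3, e4, hf_prob]
    have hfinal : ∫ a, ψ a ≤ 1 := le_trans step1 step4
    rw [hψval] at hfinal
    linarith
  · -- equality case
    intro hfeq
    have hae : (fun a : EuclideanSpace ℂ (Fin M) =>
          f a * Real.log (f a) + f a * Real.log ‖a‖)
        =ᵐ[volume] (fun a => f a * Real.log c) := by
      filter_upwards [h0] with a ha
      by_cases hm : a ∈ Metric.closedBall (0 : EuclideanSpace ℂ (Fin M)) 1
      · have hfa : f a = c * ‖a‖⁻¹ := by
          rw [hfeq a, hgdef]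
          exact Set.indicator_of_mem hm _
        have hnorm : 0 < ‖a‖ := norm_pos_iff.2 ha
        have hlogf : Real.log (f a) = Real.log c - Real.log ‖a‖ := by
          rw [hfa, Real.log_mul (ne_of_gt hcpos) (by positivity), Real.log_inv]
          ring
        rw [hlogf]
        ring
      · have hfa : f a = 0 := by
          rw [hfeq a, hgdef]
          exact Set.indicator_of_notMem hm _
        simp [hfa]
    have hsum : (∫ a, f a * Real.log (f a))
        + (∫ a : EuclideanSpace ℂ (Fin M), f a * Real.log ‖a‖) = Real.log c := by
      rw [← integral_add hf_int₁ hf_int₂, integral_congr_ae hae, integral_mul_const,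
        hf_prob, one_mul]
    linarith
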